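/- Let X be a measurable space and κ a Markov kernel from X to X. Fix H ∈ ℕ and probability measures μ_0, μ_1, …, μ_{H−1} on X satisfying μ_{h+1} = μ_h.bind κ for every 0 ≤ h < H−1. Let r : X → ℝ and q_0, q_1, …, q_H : X → ℝ be bounded measurable functions with q_H = 0. Suppose moreover that ν is a probability measure on X and Cs ≥ 0 is such that for each 0 ≤ h < H there is a measurable ρ_h : X → [0,∞] with μ_h = ν.withDensity ρ_h and ρ_h ≤ Cs ν-almost everywhere, and suppose ε_b ≥ 0 satisfies ( ∫ ( q_h(x) − r(x) − ∫ q_{h+1}(y) d(κ x)(y) )² dν(x) )^{1/2} ≤ ε_b for every 0 ≤ h < H. Then | ∫ q_0 dμ_0 − ∑_{h=0}^{H−1} ∫ r dμ_h | ≤ H · √Cs · ε_b. -/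

import Mathlib

open MeasureTheory ProbabilityTheory ENNReal

private lemma integrable_of_bdd' {X : Type*} [MeasurableSpace X] {μ : Measure X}
    [IsFiniteMeasure μ] {f : X → ℝ} (hf : AEStronglyMeasurable f μ) {M : ℝ}
    (hM : ∀ x, |f x| ≤ M) : Integrable f μ :=
  ⟨hf, HasFiniteIntegral.of_bounded (C := M) (ae_of_all _ fun x => by simpa using hM x)⟩

private lemma bind_eq_snd_compProd' {X : Type*} [MeasurableSpace X] (μ : Measure X)
    [IsProbabilityMeasure μ] (κ : Kernel X X) [IsMarkovKernel κ] :
    μ.bind (fun x => κ x) = (μ ⊗ₘ κ).snd := by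
  ext s hs
  rw [Measure.bind_apply hs κ.measurable.aemeasurable, Measure.snd_apply hs,
    Measure.compProd_apply (measurable_snd hs)]
  rfl

private lemma integral_bind_bdd {X : Type*} [MeasurableSpace X] (μ : Measure X)
    [IsProbabilityMeasure μ] (κ : Kernel X X) [IsMarkovKernel κ]
    {f : X → ℝ} (hf : Measurable f) {M : ℝ} (hM : ∀ x, |f x| ≤ M) :
    ∫ y, f y ∂(μ.bind (fun x => κ x)) = ∫ x, ∫ y, f y ∂(κ x) ∂μ := by
  rw [bind_eq_snd_compProd' μ κ, Measure.snd,
    integral_map measurable_snd.aemeasurable hf.aestronglyMeasurable,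
    Measure.integral_compProd (f := fun p : X × X => f p.2)
      (integrable_of_bdd' (hf.comp measurable_snd).aestronglyMeasurable (fun p => hM p.2))]

private lemma abs_integral_le_sqrt_mul {X : Type*} [MeasurableSpace X] {ν : Measure X}
    [IsProbabilityMeasure ν] {ρ : X → ℝ≥0∞} (hρ : Measurable ρ) {μ : Measure X}
    [IsProbabilityMeasure μ] (hμ : μ = ν.withDensity ρ) {Cs : ℝ} (hCs : 0 ≤ Cs)
    (hρle : ∀ᵐ x ∂ν, ρ x ≤ ENNReal.ofReal Cs)
    {f : X → ℝ} (hf : Measurable f) {M : ℝ} (hM : ∀ x, |f x| ≤ M)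
    {εb : ℝ} (hεb : 0 ≤ εb) (hres : Real.sqrt (∫ x, f x ^ 2 ∂ν) ≤ εb) :
    |∫ x, f x ∂μ| ≤ Real.sqrt Cs * εb := by
  have hne : Nonempty X := by
    by_contra h
    have h0 : (ν : Measure X) Set.univ = 0 := by
      simp [Set.univ_eq_empty_iff.2 (not_nonempty_iff.1 h)]
    simp [measure_univ] at h0
  have hM0 : 0 ≤ M := le_trans (abs_nonneg _) (hM (Classical.arbitrary X))
  have h2 : MemLp f 2 μ :=
    MemLp.of_bound hf.aestronglyMeasurable M (ae_of_all _ fun x => by simpa using hM x)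
  have hJ : (∫ x, f x ∂μ) ^ 2 ≤ ∫ x, f x ^ 2 ∂μ := by
    have hv := variance_nonneg f μ
    rw [variance_eq_sub h2] at hv
    simp only [Pi.pow_apply] at hv
    linarith
  have hg : Measurable fun x => ENNReal.ofReal (f x ^ 2) := (hf.pow_const 2).ennreal_ofReal
  have e1 : ∫ x, f x ^ 2 ∂μ = (∫⁻ x, ENNReal.ofReal (f x ^ 2) ∂μ).toReal :=
    integral_eq_lintegral_of_nonneg_ae (ae_of_all _ fun x => sq_nonneg _)
      (hf.pow_const 2).aestronglyMeasurable
  have e2 : ∫ x, f x ^ 2 ∂ν = (∫⁻ x, ENNReal.ofReal (f x ^ 2) ∂ν).toReal :=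
    integral_eq_lintegral_of_nonneg_ae (ae_of_all _ fun x => sq_nonneg _)
      (hf.pow_const 2).aestronglyMeasurable
  have e3 : ∫⁻ x, ENNReal.ofReal (f x ^ 2) ∂μ
      = ∫⁻ x, ρ x * ENNReal.ofReal (f x ^ 2) ∂ν := by
    rw [hμ, lintegral_withDensity_eq_lintegral_mul ν hρ hg]; rfl
  have e4 : ∫⁻ x, ρ x * ENNReal.ofReal (f x ^ 2) ∂ν
      ≤ ENNReal.ofReal Cs * ∫⁻ x, ENNReal.ofReal (f x ^ 2) ∂ν := by
    rw [← lintegral_const_mul _ hg]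
    exact lintegral_mono_ae (hρle.mono fun x hx => mul_le_mul_left hx _)
  have hfin : ∫⁻ x, ENNReal.ofReal (f x ^ 2) ∂ν ≤ ENNReal.ofReal (M ^ 2) := by
    calc ∫⁻ x, ENNReal.ofReal (f x ^ 2) ∂ν
        ≤ ∫⁻ _x, ENNReal.ofReal (M ^ 2) ∂ν := by
          refine lintegral_mono fun x => ENNReal.ofReal_le_ofReal ?_
          nlinarith [hM x, abs_nonneg (f x), neg_abs_le (f x), le_abs_self (f x)]
      _ = ENNReal.ofReal (M ^ 2) := by simp [measure_univ]
  have hfin' : ∫⁻ x, ENNReal.ofReal (f x ^ 2) ∂ν ≠ ⊤ :=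
    ne_top_of_le_ne_top ENNReal.ofReal_ne_top hfin
  have hmain : ∫ x, f x ^ 2 ∂μ ≤ Cs * ∫ x, f x ^ 2 ∂ν := by
    rw [e1, e2]
    have hle : ∫⁻ x, ENNReal.ofReal (f x ^ 2) ∂μ
        ≤ ENNReal.ofReal Cs * ∫⁻ x, ENNReal.ofReal (f x ^ 2) ∂ν := e3 ▸ e4
    calc (∫⁻ x, ENNReal.ofReal (f x ^ 2) ∂μ).toReal
        ≤ (ENNReal.ofReal Cs * ∫⁻ x, ENNReal.ofReal (f x ^ 2) ∂ν).toReal :=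
          ENNReal.toReal_mono (ENNReal.mul_ne_top ENNReal.ofReal_ne_top hfin') hle
      _ = Cs * (∫⁻ x, ENNReal.ofReal (f x ^ 2) ∂ν).toReal := by
          rw [ENNReal.toReal_mul, ENNReal.toReal_ofReal hCs]
  have hν2 : ∫ x, f x ^ 2 ∂ν ≤ εb ^ 2 := by
    have h0 : 0 ≤ ∫ x, f x ^ 2 ∂ν := integral_nonneg fun x => sq_nonneg _
    calc ∫ x, f x ^ 2 ∂ν = Real.sqrt (∫ x, f x ^ 2 ∂ν) ^ 2 := (Real.sq_sqrt h0).symm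
      _ ≤ εb ^ 2 := pow_le_pow_left₀ (Real.sqrt_nonneg _) hres 2
  have hsq : (∫ x, f x ∂μ) ^ 2 ≤ Cs * εb ^ 2 := by nlinarith
  calc |∫ x, f x ∂μ| = Real.sqrt ((∫ x, f x ∂μ) ^ 2) := (Real.sqrt_sq_eq_abs _).symm
    _ ≤ Real.sqrt (Cs * εb ^ 2) := Real.sqrt_le_sqrt hsq
    _ = Real.sqrt Cs * εb := by
        rw [Real.sqrt_mul hCs, Real.sqrt_sq hεb]

/-- Bellman-consistent pessimism bound: if every occupancy measure `μ h` has density at most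
`Cs` with respect to the data distribution `ν`, and every Bellman residual has `L²(ν)`-norm at
most `εb`, then the value-evaluation error of the candidate value function is at most
`H · √Cs · εb`. -/
theorem value_error_le_coverage_bellman {X : Type*} [MeasurableSpace X]
    (κ : ProbabilityTheory.Kernel X X) [IsMarkovKernel κ]
    (H : ℕ) (μ : ℕ → Measure X)
    (hprob : ∀ h < H, IsProbabilityMeasure (μ h))
    (hstep : ∀ h, h + 1 < H → μ (h + 1) = (μ h).bind (fun x => κ x))
    (r : X → ℝ) (hr : Measurable r) (hrb : ∃ M : ℝ, ∀ x, |r x| ≤ M)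
    (q : ℕ → X → ℝ) (hq : ∀ h ≤ H, Measurable (q h))
    (hqb : ∀ h ≤ H, ∃ M : ℝ, ∀ x, |q h x| ≤ M)
    (hqH : q H = 0)
    (ν : Measure X) (hν : IsProbabilityMeasure ν)
    (Cs : ℝ) (hCs : 0 ≤ Cs)
    (hdens : ∀ h < H, ∃ ρ : X → ℝ≥0∞, Measurable ρ ∧
      μ h = ν.withDensity ρ ∧ ∀ᵐ x ∂ν, ρ x ≤ ENNReal.ofReal Cs)
    (εb : ℝ) (hεb : 0 ≤ εb)
    (hres : ∀ h < H,
      Real.sqrt (∫ x, (q h x - r x - ∫ y, q (h + 1) y ∂(κ x)) ^ 2 ∂ν) ≤ εb) :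
    |(∫ x, q 0 x ∂(μ 0)) - ∑ h ∈ Finset.range H, ∫ x, r x ∂(μ h)| ≤
      (H : ℝ) * Real.sqrt Cs * εb := by
  obtain ⟨Mr, hMr⟩ := hrb
  -- measurability and boundedness of the kernel integral
  have hgm : ∀ h, h + 1 ≤ H → Measurable fun x => ∫ y, q (h + 1) y ∂(κ x) := by
    intro h hh
    exact (StronglyMeasurable.integral_kernel_prod_right (κ := κ)
      (f := fun _ y => q (h + 1) y)
      (((hq (h + 1) hh).comp measurable_snd).stronglyMeasurable)).measurable
  have hgb : ∀ h, h + 1 ≤ H → ∀ M2 : ℝ, (∀ x, |q (h + 1) x| ≤ M2) →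
      ∀ x, |∫ y, q (h + 1) y ∂(κ x)| ≤ M2 := by
    intro h hh M2 hM2 x
    have := norm_integral_le_of_norm_le_const (μ := κ x) (f := q (h + 1)) (C := M2)
      (ae_of_all _ fun y => by simpa using hM2 y)
    simpa [measure_univ] using this
  -- the per-step value-difference identity
  have hdiff : ∀ h, h < H →
      ∫ x, (q h x - r x - ∫ y, q (h + 1) y ∂(κ x)) ∂(μ h)
        = ((∫ x, q h x ∂(μ h)) - ∫ x, q (h + 1) x ∂(μ (h + 1)))
            - ∫ x, r x ∂(μ h) := by
    intro h hh
    haveI := hprob h hh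
    obtain ⟨M1, hM1⟩ := hqb h hh.le
    obtain ⟨M2, hM2⟩ := hqb (h + 1) hh
    have hgm' := hgm h hh
    have hgb' := hgb h hh M2 hM2
    have i1 : Integrable (q h) (μ h) :=
      integrable_of_bdd' (hq h hh.le).aestronglyMeasurable hM1
    have i2 : Integrable r (μ h) := integrable_of_bdd' hr.aestronglyMeasurable hMr
    have i3 : Integrable (fun x => ∫ y, q (h + 1) y ∂(κ x)) (μ h) :=
      integrable_of_bdd' hgm'.aestronglyMeasurable hgb'
    have e : ∫ x, (q h x - r x - ∫ y, q (h + 1) y ∂(κ x)) ∂(μ h)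
        = ((∫ x, q h x ∂(μ h)) - ∫ x, r x ∂(μ h))
            - ∫ x, (∫ y, q (h + 1) y ∂(κ x)) ∂(μ h) := by
      have e0 := integral_sub (i1.sub i2) i3
      simp only [Pi.sub_apply] at e0
      rw [e0, integral_sub i1 i2]
    have e2 : ∫ x, (∫ y, q (h + 1) y ∂(κ x)) ∂(μ h)
        = ∫ x, q (h + 1) x ∂(μ (h + 1)) := by
      rcases lt_or_eq_of_le (Nat.succ_le_of_lt hh) with h1 | h1
      · haveI := hprob (h + 1) h1
        rw [hstep h h1, integral_bind_bdd (μ h) κ (hq (h + 1) h1.le) hM2]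
      · have hq0 : q (h + 1) = 0 := by rw [show h + 1 = H from h1]; exact hqH
        simp [hq0]
    rw [e, e2]; ring
  -- telescoping
  have htel : (∫ x, q 0 x ∂(μ 0)) - ∑ h ∈ Finset.range H, ∫ x, r x ∂(μ h)
      = ∑ h ∈ Finset.range H,
          ∫ x, (q h x - r x - ∫ y, q (h + 1) y ∂(κ x)) ∂(μ h) := by
    have hs : ∑ h ∈ Finset.range H,
          ∫ x, (q h x - r x - ∫ y, q (h + 1) y ∂(κ x)) ∂(μ h)
        = (∑ h ∈ Finset.range H,
            ((fun k => ∫ x, q k x ∂(μ k)) h - (fun k => ∫ x, q k x ∂(μ k)) (h + 1)))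
          - ∑ h ∈ Finset.range H, ∫ x, r x ∂(μ h) := by
      rw [← Finset.sum_sub_distrib]
      exact Finset.sum_congr rfl fun h hh => by
        rw [hdiff h (Finset.mem_range.1 hh)]
    rw [hs, Finset.sum_range_sub']
    have : ∫ x, q H x ∂(μ H) = 0 := by simp [hqH]
    rw [this]; ring
  rw [htel]
  calc |∑ h ∈ Finset.range H,
          ∫ x, (q h x - r x - ∫ y, q (h + 1) y ∂(κ x)) ∂(μ h)|
      ≤ ∑ h ∈ Finset.range H,
          |∫ x, (q h x - r x - ∫ y, q (h + 1) y ∂(κ x)) ∂(μ h)| :=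
        Finset.abs_sum_le_sum_abs _ _
    _ ≤ ∑ _h ∈ Finset.range H, Real.sqrt Cs * εb := by
        refine Finset.sum_le_sum fun h hh => ?_
        have hh' := Finset.mem_range.1 hh
        haveI := hprob h hh'
        obtain ⟨ρ, hρm, hμρ, hρle⟩ := hdens h hh'
        obtain ⟨M1, hM1⟩ := hqb h hh'.le
        obtain ⟨M2, hM2⟩ := hqb (h + 1) hh'
        have hgb' := hgb h hh' M2 hM2
        have hFm : Measurable fun x => q h x - r x - ∫ y, q (h + 1) y ∂(κ x) :=
          ((hq h hh'.le).sub hr).sub (hgm h hh')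
        have hFb : ∀ x, |q h x - r x - ∫ y, q (h + 1) y ∂(κ x)| ≤ M1 + Mr + M2 := by
          intro x
          have h1 := abs_le.1 (hM1 x)
          have h2 := abs_le.1 (hMr x)
          have h3 := abs_le.1 (hgb' x)
          rw [abs_le]; constructor <;> [linarith; linarith]
        exact abs_integral_le_sqrt_mul hρm hμρ hCs hρle hFm hFb hεb (hres h hh')
    _ = (H : ℝ) * Real.sqrt Cs * εb := by
        rw [Finset.sum_const, Finset.card_range, nsmul_eq_mul]; ring
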